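/- Necessary condition for consensus-endemic equilibria: suppose Σ_{j=1}^n β_{ij} > 0 for all i. If (x^I*, x^V*, o*) is a fixed point of the coupled SIV-opinion model with x^I* ≠ 0 and o* = a·1_n for some a (a consensus-endemic equilibrium), with all components of x^I*, x^V*, o* in [0,1], then a ∈ (0,1] and, for every i ∈ {1,…,n}, δ_i = (1 − a − θ_i(a)(1−a)/(γ_i(a) + θ_i(a))) / ( a/(γ_i(a) + θ_i(a)) + 1/(Σ_{j=1}^n β_{ij}) ). -/

import Mathlib

/-- **Proposition 2 (necessary condition for consensus-endemic equilibria).**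
If `(x^I*, x^V*, o*)` is a fixed point of the coupled SIV-opinion model with
`x^I* ≠ 0` and `o* = a·1ₙ`, with all components in `[0,1]`, then `a ∈ (0,1]`
and `δ_i` satisfies the relation (13) of the paper for every `i`. -/
theorem consensus_endemic_necessary_condition {n : ℕ} (c : ℝ)
    (hc : c ∈ Set.Ioo (0:ℝ) 1)
    (δ φ : Fin n → ℝ) (β w : Fin n → Fin n → ℝ)
    (θ γ : Fin n → ℝ → ℝ)
    (hδ : ∀ i, δ i ∈ Set.Icc (0:ℝ) 1)
    (hβ : ∀ i j, β i j ∈ Set.Icc (0:ℝ) 1)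
    (hβpos : ∀ i, 0 < ∑ j, β i j)
    (hθ : ∀ i, ∀ o' ∈ Set.Icc (0:ℝ) 1, θ i o' ∈ Set.Icc (0:ℝ) 1)
    (hγ : ∀ i, ∀ o' ∈ Set.Icc (0:ℝ) 1, γ i o' ∈ Set.Icc (0:ℝ) 1)
    (hθγ : ∀ i, ∀ o' ∈ Set.Icc (0:ℝ) 1, c ≤ θ i o' + γ i o')
    (hφ : ∀ i, φ i ∈ Set.Ioo (0:ℝ) 1)
    (hw : ∀ i j, 0 ≤ w i j) (hwrow : ∀ i, ∑ j, w i j = 1)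
    (xI xV o : Fin n → ℝ) (a : ℝ)
    (hxIr : ∀ i, xI i ∈ Set.Icc (0:ℝ) 1)
    (hxVr : ∀ i, xV i ∈ Set.Icc (0:ℝ) 1)
    (hor : ∀ i, o i ∈ Set.Icc (0:ℝ) 1)
    -- `(xI, xV, o)` is a fixed point of the update equations:
    (hI : ∀ i, xI i =
      xI i - δ i * xI i + (1 - xI i - xV i) * ∑ j, β i j * xI j)
    (hV : ∀ i, xV i =
      xV i + δ i * xI i - γ i (o i) * xV i + θ i (o i) * (1 - xI i - xV i))
    (hO : ∀ i, o i =
      φ i * xI i + (1 - φ i) * (o i + (1 - o i) * ∑ j, w i j * (o j - o i)))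
    -- endemic with consensus opinions:
    (hend : xI ≠ 0) (hcons : ∀ i, o i = a) :
    a ∈ Set.Ioc (0:ℝ) 1 ∧
    ∀ i, δ i = (1 - a - θ i a * (1 - a) / (γ i a + θ i a)) /
      (a / (γ i a + θ i a) + 1 / ∑ j, β i j) := by
  obtain ⟨i0, hi0⟩ : ∃ i, xI i ≠ 0 := by
    by_contra h; push_neg at h; exact hend (funext h)
  have ha01 : a ∈ Set.Icc (0:ℝ) 1 := (hcons i0) ▸ hor i0
  have hxIa : ∀ i, xI i = a := by
    intro i
    have h := hO i
    simp only [hcons, sub_self, mul_zero, Finset.sum_const_zero, add_zero] at h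
    have hφi := hφ i
    have h2 : φ i * xI i = φ i * a := by linear_combination -h
    exact mul_left_cancel₀ (ne_of_gt hφi.1) h2
  have hane : a ≠ 0 := hxIa i0 ▸ hi0
  have ha : 0 < a := lt_of_le_of_ne ha01.1 (Ne.symm hane)
  refine ⟨⟨ha, ha01.2⟩, fun i => ?_⟩
  have hG : 0 < γ i a + θ i a := by
    have := hθγ i a ha01; linarith [hc.1]
  have hB := hβpos i
  have hv := hV i
  rw [hcons i, hxIa i] at hv
  have h3 : xV i * (γ i a + θ i a) = δ i * a + θ i a * (1 - a) := by
    linear_combination hv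
  have hi := hI i
  have hsum : ∑ j, β i j * xI j = a * ∑ j, β i j := by
    rw [Finset.mul_sum]; exact Finset.sum_congr rfl fun j _ => by rw [hxIa j]; ring
  rw [hxIa i, hsum] at hi
  have h1 : δ i * a = ((1 - a - xV i) * ∑ j, β i j) * a := by linear_combination hi
  have h2 : δ i = (1 - a - xV i) * ∑ j, β i j := mul_right_cancel₀ hane h1
  have hden : 0 < a / (γ i a + θ i a) + 1 / ∑ j, β i j :=
    add_pos (div_pos ha hG) (div_pos one_pos hB)
  rw [eq_div_iff (ne_of_gt hden)]
  field_simp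
  linear_combination (γ i a + θ i a) * h2 - (∑ j, β i j) * h3
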